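/- Let (I, e, N, ᾱ, d) be a fusion algebra datum with a length function ℓ taking values in the nonnegative integers. Let p ∈ ℕ and let f : I → ℂ be finitely supported with ℓ(α) ≤ p for every α in the support of f. If C ≥ 0 is such that ‖f · ξ‖₂ ≤ C·‖ξ‖₂ for all finitely supported ξ : I → ℂ, then ‖δ(f)ξ‖₂ ≤ p(p+1)·C·‖ξ‖₂ for all finitely supported ξ, where (δ(f)ξ)(γ) := ∑_{α,β} (ℓ(γ) − ℓ(β))·f(α)·N_{α,β}^γ·ξ(β), (f · ξ)(γ) := ∑_{α,β} f(α)·ξ(β)·N_{α,β}^γ, and ‖ξ‖₂ := (∑_γ |ξ(γ)|²·d(γ)²)^{1/2}. -/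

import Mathlib

/-- A fusion algebra datum on an index set `I`: a unit `e`, structure constants
`N`, a conjugation `bar`, and a dimension function `d`, satisfying finiteness
of fusion, the unit rules, Frobenius reciprocity and multiplicativity of `d`. -/
structure FusionData (I : Type*) where
  e : I
  N : I → I → I → ℕ
  bar : I → I
  d : I → ℝ
  N_fin : ∀ α β, (Function.support (N α β)).Finite
  bar_bar : ∀ α, bar (bar α) = α
  bar_e : bar e = e
  one_le_d : ∀ α, 1 ≤ d α
  d_bar : ∀ α, d (bar α) = d α
  N_unit_right : ∀ α, N α e α = 1
  N_unit_right' : ∀ α γ, γ ≠ α → N α e γ = 0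
  N_unit_left : ∀ α, N e α α = 1
  N_unit_left' : ∀ α γ, γ ≠ α → N e α γ = 0
  frob₁ : ∀ α β γ, N α β γ = N (bar α) γ β
  frob₂ : ∀ α β γ, N α β γ = N γ (bar β) α
  d_mul : ∀ α β, d α * d β = ∑ᶠ γ, (N α β γ : ℝ) * d γ

/-- A length function on a fusion algebra datum. -/
structure IsLength {I : Type*} (F : FusionData I) (ℓ : I → ℝ) : Prop where
  nonneg : ∀ α, 0 ≤ ℓ α
  map_e : ℓ F.e = 0
  map_bar : ∀ α, ℓ (F.bar α) = ℓ α
  subadd : ∀ α β γ, F.N α β γ ≠ 0 → ℓ γ ≤ ℓ α + ℓ β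

/-- A length function is proper if balls are finite and only `e` has length 0. -/
def IsProperLength {I : Type*} (F : FusionData I) (ℓ : I → ℝ) : Prop :=
  (∀ R : ℝ, 0 ≤ R → {α : I | ℓ α ≤ R}.Finite) ∧ ∀ α, ℓ α = 0 → α = F.e

/-- The fusion product `(f · ξ)(γ) = ∑_{α,β} f(α) ξ(β) N_{α,β}^γ`. -/
noncomputable def fmul {I : Type*} (F : FusionData I) (f ξ : I → ℂ) : I → ℂ :=
  fun γ => ∑ᶠ α, ∑ᶠ β, f α * ξ β * (F.N α β γ : ℂ)

/-- The weighted `ℓ²`-norm `‖ξ‖₂ = (∑_γ |ξ(γ)|² d(γ)²)^{1/2}`. -/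
noncomputable def norm2 {I : Type*} (F : FusionData I) (ξ : I → ℂ) : ℝ :=
  Real.sqrt (∑ᶠ γ, ‖ξ γ‖ ^ 2 * F.d γ ^ 2)


/-- The iterated Dirac commutator `δ^k(f)` acting on finitely supported `ξ`:
`(δ^k(f)ξ)(γ) = ∑_{α,β} (ℓ(γ) − ℓ(β))^k f(α) N_{α,β}^γ ξ(β)`. -/
noncomputable def deltaK {I : Type*} (F : FusionData I) (ℓ : I → ℝ) (k : ℕ)
    (f ξ : I → ℂ) : I → ℂ :=
  fun γ => ∑ᶠ α, ∑ᶠ β, ((ℓ γ - ℓ β : ℝ) : ℂ) ^ k * f α * (F.N α β γ : ℂ) * ξ β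

section Aux
open Function
variable {I : Type*} (F : FusionData I)

lemma weight_support (ξ : I → ℂ) :
    (Function.support fun γ => ‖ξ γ‖ ^ 2 * F.d γ ^ 2) ⊆ Function.support ξ := by
  intro γ h
  simp only [Function.mem_support] at h ⊢
  intro h0; exact h (by simp [h0])

lemma norm2_nonneg (ξ : I → ℂ) : 0 ≤ norm2 F ξ := Real.sqrt_nonneg _

lemma norm2_eq_sqrt_sum {ξ : I → ℂ} {Γ : Finset I} (h : Function.support ξ ⊆ (Γ : Set I)) :
    norm2 F ξ = Real.sqrt (∑ γ ∈ Γ, ‖ξ γ‖ ^ 2 * F.d γ ^ 2) := by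
  unfold norm2
  rw [finsum_eq_finset_sum_of_support_subset _ ((weight_support F ξ).trans h)]

lemma norm2_sq {ξ : I → ℂ} {Γ : Finset I} (h : Function.support ξ ⊆ (Γ : Set I)) :
    norm2 F ξ ^ 2 = ∑ γ ∈ Γ, ‖ξ γ‖ ^ 2 * F.d γ ^ 2 := by
  rw [norm2_eq_sqrt_sum F h, Real.sq_sqrt (by positivity)]

lemma sum_le_norm2_sq {ξ : I → ℂ} (hξ : (Function.support ξ).Finite) (Γ : Finset I) :
    ∑ γ ∈ Γ, ‖ξ γ‖ ^ 2 * F.d γ ^ 2 ≤ norm2 F ξ ^ 2 := by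
  classical
  have hsub : Function.support ξ ⊆ ((Γ ∪ hξ.toFinset : Finset I) : Set I) := by
    intro γ hγ
    simp only [Finset.coe_union, Set.mem_union, Finset.mem_coe]
    exact Or.inr (hξ.mem_toFinset.2 hγ)
  rw [norm2_sq F hsub]
  refine Finset.sum_le_sum_of_subset_of_nonneg Finset.subset_union_left ?_
  intro γ _ _; positivity

lemma le_of_sq_le_sq' {a b : ℝ} (ha : 0 ≤ a) (hb : 0 ≤ b) (h : a ^ 2 ≤ b ^ 2) : a ≤ b := by
  nlinarith

lemma norm2_add_le {x y : I → ℂ} (hx : (support x).Finite) (hy : (support y).Finite) :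
    norm2 F (fun γ => x γ + y γ) ≤ norm2 F x + norm2 F y := by
  classical
  set Γ : Finset I := hx.toFinset ∪ hy.toFinset with hΓ
  have hxs : support x ⊆ (Γ : Set I) := by
    intro γ hγ
    simp only [hΓ, Finset.coe_union, Set.mem_union, Finset.mem_coe, Set.Finite.mem_toFinset]
    exact Or.inl hγ
  have hys : support y ⊆ (Γ : Set I) := by
    intro γ hγ
    simp only [hΓ, Finset.coe_union, Set.mem_union, Finset.mem_coe, Set.Finite.mem_toFinset]
    exact Or.inr hγ
  have hxys : support (fun γ => x γ + y γ) ⊆ (Γ : Set I) := by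
    intro γ hγ
    simp only [mem_support] at hγ
    by_contra h
    have hxγ : x γ = 0 := by
      by_contra h'; exact h (hxs h')
    have hyγ : y γ = 0 := by
      by_contra h'; exact h (hys h')
    exact hγ (by rw [hxγ, hyγ, add_zero])
  set u : EuclideanSpace ℝ Γ := WithLp.toLp 2 (fun γ : Γ => ‖x γ.1‖ * F.d γ.1) with hu
  set v : EuclideanSpace ℝ Γ := WithLp.toLp 2 (fun γ : Γ => ‖y γ.1‖ * F.d γ.1) with hv
  have hdnn : ∀ γ : I, 0 ≤ F.d γ := fun γ => le_trans zero_le_one (F.one_le_d γ)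
  have hnu : ‖u‖ = norm2 F x := by
    rw [EuclideanSpace.norm_eq, norm2_eq_sqrt_sum F hxs, ← Finset.sum_coe_sort Γ]
    congr 1
    refine Finset.sum_congr rfl fun γ _ => ?_
    rw [hu]
    simp only [PiLp.toLp_apply, Real.norm_eq_abs, abs_mul, abs_norm, abs_of_nonneg (hdnn γ.1)]
    ring
  have hnv : ‖v‖ = norm2 F y := by
    rw [EuclideanSpace.norm_eq, norm2_eq_sqrt_sum F hys, ← Finset.sum_coe_sort Γ]
    congr 1
    refine Finset.sum_congr rfl fun γ _ => ?_
    rw [hv]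
    simp only [PiLp.toLp_apply, Real.norm_eq_abs, abs_mul, abs_norm, abs_of_nonneg (hdnn γ.1)]
    ring
  have step1 : norm2 F (fun γ => x γ + y γ) ≤ ‖u + v‖ := by
    rw [EuclideanSpace.norm_eq, norm2_eq_sqrt_sum F hxys, ← Finset.sum_coe_sort Γ]
    apply Real.sqrt_le_sqrt
    refine Finset.sum_le_sum fun γ _ => ?_
    have h1 : ‖x γ.1 + y γ.1‖ ≤ ‖x γ.1‖ + ‖y γ.1‖ := norm_add_le _ _
    have h2 : ‖(u + v) γ‖ = (‖x γ.1‖ + ‖y γ.1‖) * F.d γ.1 := by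
      have : (u + v) γ = (‖x γ.1‖ + ‖y γ.1‖) * F.d γ.1 := by
        simp only [PiLp.add_apply, hu, hv, PiLp.toLp_apply]; ring
      rw [this, Real.norm_eq_abs,
        abs_of_nonneg (mul_nonneg (by positivity) (hdnn γ.1))]
    have h3 : ‖x γ.1 + y γ.1‖ ^ 2 ≤ (‖x γ.1‖ + ‖y γ.1‖) ^ 2 := by
      nlinarith [norm_nonneg (x γ.1 + y γ.1), norm_nonneg (x γ.1), norm_nonneg (y γ.1)]
    rw [h2, mul_pow]
    exact mul_le_mul_of_nonneg_right h3 (by positivity)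
  calc norm2 F (fun γ => x γ + y γ) ≤ ‖u + v‖ := step1
    _ ≤ ‖u‖ + ‖v‖ := norm_add_le _ _
    _ = norm2 F x + norm2 F y := by rw [hnu, hnv]

lemma support_finsetsum {ι : Type*} (s : Finset ι) (g : ι → I → ℂ)
    (h : ∀ j ∈ s, (support (g j)).Finite) :
    (support fun γ => ∑ j ∈ s, g j γ).Finite := by
  apply Set.Finite.subset (Set.Finite.biUnion s.finite_toSet h)
  intro γ hγ
  simp only [mem_support] at hγ
  by_contra hc
  simp only [Set.mem_iUnion, not_exists] at hc
  refine hγ (Finset.sum_eq_zero fun j hj => ?_)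
  by_contra hne
  exact hc j hj hne

lemma norm2_finsetsum_le {ι : Type*} (J : Finset ι) (g : ι → I → ℂ)
    (hg : ∀ j ∈ J, (support (g j)).Finite) :
    norm2 F (fun γ => ∑ j ∈ J, g j γ) ≤ ∑ j ∈ J, norm2 F (g j) := by
  classical
  induction J using Finset.induction with
  | empty => simp [norm2]
  | @insert a s ha ih =>
    have hga : (support (g a)).Finite := hg a (Finset.mem_insert_self a s)
    have hgs : ∀ j ∈ s, (support (g j)).Finite := fun j hj => hg j (Finset.mem_insert_of_mem hj)
    have heq : (fun γ => ∑ j ∈ insert a s, g j γ) = fun γ => g a γ + ∑ j ∈ s, g j γ := by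
      funext γ; rw [Finset.sum_insert ha]
    rw [heq, Finset.sum_insert ha]
    calc norm2 F (fun γ => g a γ + ∑ j ∈ s, g j γ)
        ≤ norm2 F (g a) + norm2 F (fun γ => ∑ j ∈ s, g j γ) :=
          norm2_add_le F hga (support_finsetsum s g hgs)
      _ ≤ norm2 F (g a) + ∑ j ∈ s, norm2 F (g j) := by
          exact add_le_add_right (ih hgs) _

lemma norm2_const_mul (c : ℂ) {η : I → ℂ} (hη : (support η).Finite) :
    norm2 F (fun γ => c * η γ) = ‖c‖ * norm2 F η := by
  classical
  have hs : support (fun γ => c * η γ) ⊆ (hη.toFinset : Set I) := by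
    intro γ hγ
    simp only [mem_support] at hγ
    simp only [Finset.mem_coe, hη.mem_toFinset, mem_support]
    intro h; exact hγ (by rw [h, mul_zero])
  rw [norm2_eq_sqrt_sum F hs, norm2_eq_sqrt_sum F (by simp : support η ⊆ (hη.toFinset : Set I)),
    ← Real.sqrt_sq (norm_nonneg c), ← Real.sqrt_mul (by positivity)]
  congr 1
  rw [Finset.mul_sum]
  refine Finset.sum_congr rfl fun γ _ => ?_
  rw [norm_mul, mul_pow]; ring

lemma finsum2_eq_sum (g : I → I → ℂ) {A B : Finset I}
    (hA : ∀ α, α ∉ A → ∀ β, g α β = 0)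
    (hB : ∀ β, β ∉ B → ∀ α, g α β = 0) :
    ∑ᶠ α, ∑ᶠ β, g α β = ∑ α ∈ A, ∑ β ∈ B, g α β := by
  rw [finsum_eq_finset_sum_of_support_subset _ (s := A) ?_]
  · refine Finset.sum_congr rfl fun α _ => ?_
    refine finsum_eq_finset_sum_of_support_subset _ (s := B) ?_
    intro β hβ
    simp only [mem_support] at hβ
    by_contra h
    exact hβ (hB β h α)
  · intro α hα
    simp only [mem_support] at hα
    by_contra h
    exact hα (finsum_eq_zero_of_forall_eq_zero (hA α h))

lemma fmul_apply_eq_zero (f η : I → ℂ) (γ : I)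
    (h : ∀ α β, f α ≠ 0 → η β ≠ 0 → F.N α β γ = 0) : fmul F f η γ = 0 := by
  rw [fmul]
  refine finsum_eq_zero_of_forall_eq_zero fun α => ?_
  refine finsum_eq_zero_of_forall_eq_zero fun β => ?_
  by_cases hα : f α = 0
  · simp [hα]
  by_cases hβ : η β = 0
  · simp [hβ]
  simp [h α β hα hβ]

lemma support_fmul {f ξ : I → ℂ} (hf : (support f).Finite) (hξ : (support ξ).Finite) :
    (support (fmul F f ξ)).Finite := by
  apply Set.Finite.subset
    (Set.Finite.biUnion hf (fun α _ => Set.Finite.biUnion hξ (fun β _ => F.N_fin α β)))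
  intro γ hγ
  simp only [mem_support] at hγ
  by_contra hc
  simp only [Set.mem_iUnion, not_exists] at hc
  refine hγ (fmul_apply_eq_zero F f ξ γ fun α β hα hβ => ?_)
  by_contra hN
  exact hc α hα β hβ hN

lemma sum_abs_Icc (p : ℕ) : ∑ j ∈ Finset.Icc (-(p : ℤ)) (p : ℤ), |j| = p * (p + 1) := by
  induction p with
  | zero => simp
  | succ n ih =>
    have hset : Finset.Icc (-((n + 1 : ℕ) : ℤ)) ((n + 1 : ℕ) : ℤ)
        = insert (-((n : ℤ) + 1)) (insert ((n : ℤ) + 1) (Finset.Icc (-(n : ℤ)) (n : ℤ))) := by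
      ext x
      simp only [Finset.mem_Icc, Finset.mem_insert]
      push_cast
      omega
    have h1 : (-((n : ℤ) + 1)) ∉ insert ((n : ℤ) + 1) (Finset.Icc (-(n : ℤ)) (n : ℤ)) := by
      simp only [Finset.mem_insert, Finset.mem_Icc]
      omega
    have h2 : ((n : ℤ) + 1) ∉ Finset.Icc (-(n : ℤ)) (n : ℤ) := by
      simp only [Finset.mem_Icc]; omega
    rw [hset, Finset.sum_insert h1, Finset.sum_insert h2, ih, abs_neg,
      abs_of_nonneg (by positivity : (0:ℤ) ≤ (n : ℤ) + 1)]
    push_cast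
    ring

end Aux

/-- If `ℓ` is integer-valued, `f` is supported on
`{α : ℓ α ≤ p}`, and left multiplication by `f` is bounded by `C`, then the
commutator `δ(f)` is bounded by `p(p+1) C`. -/
theorem stmt_14 {I : Type*} (F : FusionData I) (ℓ : I → ℝ) (hℓ : IsLength F ℓ)
    (hint : ∀ α : I, ∃ n : ℕ, ℓ α = n)
    (p : ℕ) (f : I → ℂ) (hf : (Function.support f).Finite)
    (hsupp : ∀ α : I, f α ≠ 0 → ℓ α ≤ p)
    (C : ℝ) (hC : 0 ≤ C)
    (hbound : ∀ ξ : I → ℂ, (Function.support ξ).Finite →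
      norm2 F (fmul F f ξ) ≤ C * norm2 F ξ) :
    ∀ ξ : I → ℂ, (Function.support ξ).Finite →
      norm2 F (deltaK F ℓ 1 f ξ) ≤ (p : ℝ) * (p + 1) * C * norm2 F ξ := by
  classical
  intro ξ hξ
  choose L hL using hint
  set A : Finset I := hf.toFinset with hA
  set B : Finset I := hξ.toFinset with hB
  have hAs : ∀ α, α ∉ A → f α = 0 := by
    intro α hα; by_contra h; exact hα (hf.mem_toFinset.2 h)
  have hBs : ∀ β, β ∉ B → ξ β = 0 := by
    intro β hβ; by_contra h; exact hβ (hξ.mem_toFinset.2 h)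
  -- the pieces of ξ
  set ξn : ℤ → I → ℂ := fun n β => if (L β : ℤ) = n then ξ β else 0 with hξn
  have hξnsupp : ∀ n, Function.support (ξn n) ⊆ Function.support ξ := by
    intro n β hβ
    simp only [Function.mem_support, hξn] at hβ ⊢
    intro h; exact hβ (by simp [h])
  have hξnfin : ∀ n, (Function.support (ξn n)).Finite := fun n => hξ.subset (hξnsupp n)
  set T : ℤ → I → ℂ := fun j γ => fmul F f (ξn ((L γ : ℤ) - j)) γ with hT
  set S : ℤ → I → ℂ := fun j γ => (j : ℂ) * T j γ with hS
  -- key length estimate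
  have key : ∀ α β γ, f α ≠ 0 → ξ β ≠ 0 → F.N α β γ ≠ 0 →
      (L γ : ℤ) - L β ∈ Finset.Icc (-(p : ℤ)) (p : ℤ) := by
    intro α β γ hfα hξβ hN
    have h1 : ℓ γ ≤ ℓ α + ℓ β := hℓ.subadd _ _ _ hN
    have h2 : ℓ β ≤ ℓ α + ℓ γ := by
      have hN' : F.N (F.bar α) γ β ≠ 0 := by rw [← F.frob₁]; exact hN
      have h := hℓ.subadd _ _ _ hN'
      rwa [hℓ.map_bar] at h
    have hα := hsupp α hfα
    have e1 : (L γ : ℝ) ≤ p + (L β : ℝ) := by rw [← hL γ, ← hL β]; linarith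
    have e2 : (L β : ℝ) ≤ p + (L γ : ℝ) := by rw [← hL β, ← hL γ]; linarith
    rw [Finset.mem_Icc]
    constructor
    · exact_mod_cast (by linarith : -(p : ℝ) ≤ (L γ : ℝ) - (L β : ℝ))
    · exact_mod_cast (by linarith : (L γ : ℝ) - (L β : ℝ) ≤ (p : ℝ))
  -- finiteness of supports
  have hUfin : (⋃ α ∈ Function.support f, ⋃ β ∈ Function.support ξ,
      Function.support (F.N α β)).Finite :=
    Set.Finite.biUnion hf fun α _ => Set.Finite.biUnion hξ fun β _ => F.N_fin α β
  have hTfin : ∀ j, (Function.support (T j)).Finite := by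
    intro j
    apply hUfin.subset
    intro γ hγ
    simp only [Function.mem_support, hT] at hγ
    by_contra hc
    simp only [Set.mem_iUnion, not_exists] at hc
    refine hγ (fmul_apply_eq_zero F f _ γ fun α β hα hβ => ?_)
    by_contra hN
    exact hc α hα β (fun h => hβ (by simp [hξn, h])) hN
  have hSfin : ∀ j, (Function.support (S j)).Finite := by
    intro j
    apply (hTfin j).subset
    intro γ hγ
    simp only [Function.mem_support, hS] at hγ ⊢
    intro h; exact hγ (by rw [h, mul_zero])
  -- decomposition of the commutator
  have decomp : deltaK F ℓ 1 f ξ = fun γ => ∑ j ∈ Finset.Icc (-(p : ℤ)) (p : ℤ), S j γ := by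
    funext γ
    have lhs : deltaK F ℓ 1 f ξ γ
        = ∑ α ∈ A, ∑ β ∈ B, ((ℓ γ - ℓ β : ℝ) : ℂ) ^ 1 * f α * (F.N α β γ : ℂ) * ξ β := by
      refine finsum2_eq_sum _ ?_ ?_
      · intro α hα β; rw [hAs α hα]; ring
      · intro β hβ α; rw [hBs β hβ]; ring
    have hSγ : ∀ j : ℤ, S j γ
        = ∑ α ∈ A, ∑ β ∈ B, (j : ℂ) * (f α * ξn ((L γ : ℤ) - j) β * (F.N α β γ : ℂ)) := by
      intro j
      have : fmul F f (ξn ((L γ : ℤ) - j)) γ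
          = ∑ α ∈ A, ∑ β ∈ B, f α * ξn ((L γ : ℤ) - j) β * (F.N α β γ : ℂ) := by
        refine finsum2_eq_sum _ ?_ ?_
        · intro α hα β; rw [hAs α hα]; ring
        · intro β hβ α
          have : ξn ((L γ : ℤ) - j) β = 0 := by simp [hξn, hBs β hβ]
          rw [this]; ring
      have hSeq : S j γ = (j : ℂ) * fmul F f (ξn ((L γ : ℤ) - j)) γ := rfl
      rw [hSeq, this, Finset.mul_sum]
      exact Finset.sum_congr rfl fun α _ => Finset.mul_sum _ _ _
    have swap : ∑ j ∈ Finset.Icc (-(p : ℤ)) (p : ℤ), ∑ α ∈ A, ∑ β ∈ B,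
        (j : ℂ) * (f α * ξn ((L γ : ℤ) - j) β * (F.N α β γ : ℂ))
        = ∑ α ∈ A, ∑ β ∈ B, ∑ j ∈ Finset.Icc (-(p : ℤ)) (p : ℤ),
        (j : ℂ) * (f α * ξn ((L γ : ℤ) - j) β * (F.N α β γ : ℂ)) := by
      rw [Finset.sum_comm]
      exact Finset.sum_congr rfl fun α _ => Finset.sum_comm
    rw [lhs, Finset.sum_congr rfl fun j _ => hSγ j, swap]
    refine Finset.sum_congr rfl fun α _ => ?_
    refine Finset.sum_congr rfl fun β _ => ?_
    by_cases hfα : f α = 0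
    · simp [hfα]
    by_cases hξβ : ξ β = 0
    · simp [hξβ, hξn]
    by_cases hN : F.N α β γ = 0
    · simp [hN]
    have hmem := key α β γ hfα hξβ hN
    have step : ∀ j ∈ Finset.Icc (-(p : ℤ)) (p : ℤ),
        (j : ℂ) * (f α * ξn ((L γ : ℤ) - j) β * (F.N α β γ : ℂ))
        = if j = (L γ : ℤ) - (L β : ℤ) then (j : ℂ) * (f α * ξ β * (F.N α β γ : ℂ)) else 0 := by
      intro j _
      by_cases h : j = (L γ : ℤ) - (L β : ℤ)
      · rw [if_pos h, hξn]
        simp only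
        rw [if_pos (by omega)]
      · rw [if_neg h, hξn]
        simp only
        rw [if_neg (by omega), mul_zero, zero_mul, mul_zero]
    rw [Finset.sum_congr rfl step, Finset.sum_ite_eq' _ _ _, if_pos hmem, pow_one,
      hL γ, hL β]
    push_cast
    ring
  -- bound on each T j
  have hTbound : ∀ j : ℤ, norm2 F (T j) ≤ C * norm2 F ξ := by
    intro j
    set Γ : Finset I := (hTfin j).toFinset with hΓ
    set MS : Finset ℤ := Γ.image (fun γ => (L γ : ℤ)) with hMS
    have h1 : norm2 F (T j) ^ 2 = ∑ γ ∈ Γ, ‖T j γ‖ ^ 2 * F.d γ ^ 2 :=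
      norm2_sq F (by simp [hΓ])
    have h2 : ∑ γ ∈ Γ, ‖T j γ‖ ^ 2 * F.d γ ^ 2
        = ∑ m ∈ MS, ∑ γ ∈ Γ.filter (fun γ => (L γ : ℤ) = m), ‖T j γ‖ ^ 2 * F.d γ ^ 2 :=
      (Finset.sum_fiberwise_of_maps_to (fun γ hγ => Finset.mem_image_of_mem _ hγ) _).symm
    have h3 : ∀ m ∈ MS, ∑ γ ∈ Γ.filter (fun γ => (L γ : ℤ) = m), ‖T j γ‖ ^ 2 * F.d γ ^ 2
        ≤ C ^ 2 * norm2 F (ξn (m - j)) ^ 2 := by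
      intro m _
      have hcg : ∀ γ ∈ Γ.filter (fun γ => (L γ : ℤ) = m),
          ‖T j γ‖ ^ 2 * F.d γ ^ 2 = ‖fmul F f (ξn (m - j)) γ‖ ^ 2 * F.d γ ^ 2 := by
        intro γ hγ
        have hm : (L γ : ℤ) = m := (Finset.mem_filter.1 hγ).2
        rw [hT]
        simp only
        rw [hm]
      rw [Finset.sum_congr rfl hcg]
      have hb := hbound (ξn (m - j)) (hξnfin _)
      calc ∑ γ ∈ Γ.filter (fun γ => (L γ : ℤ) = m), ‖fmul F f (ξn (m - j)) γ‖ ^ 2 * F.d γ ^ 2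
          ≤ norm2 F (fmul F f (ξn (m - j))) ^ 2 :=
            sum_le_norm2_sq F (support_fmul F hf (hξnfin _)) _
        _ ≤ (C * norm2 F (ξn (m - j))) ^ 2 := by
            have h0 := norm2_nonneg F (fmul F f (ξn (m - j)))
            nlinarith
        _ = C ^ 2 * norm2 F (ξn (m - j)) ^ 2 := by ring
    have h4 : ∑ m ∈ MS, norm2 F (ξn (m - j)) ^ 2 ≤ norm2 F ξ ^ 2 := by
      have hBn : ∀ k : ℤ, Function.support (ξn k) ⊆ (B : Set I) := by
        intro k β hβ
        exact (by simp [hB, hξnsupp k hβ] : β ∈ (B : Set I))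
      have e1 : ∀ m ∈ MS, norm2 F (ξn (m - j)) ^ 2
          = ∑ γ ∈ B, ‖ξn (m - j) γ‖ ^ 2 * F.d γ ^ 2 := fun m _ => norm2_sq F (hBn _)
      rw [Finset.sum_congr rfl e1, norm2_sq F (by simp [hB] : Function.support ξ ⊆ (B : Set I)),
        Finset.sum_comm]
      refine Finset.sum_le_sum fun γ _ => ?_
      have e2 : ∀ m ∈ MS, ‖ξn (m - j) γ‖ ^ 2 * F.d γ ^ 2
          = if m = (L γ : ℤ) + j then ‖ξ γ‖ ^ 2 * F.d γ ^ 2 else 0 := by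
        intro m _
        by_cases h : m = (L γ : ℤ) + j
        · rw [if_pos h, hξn]
          simp only
          rw [if_pos (by omega)]
        · rw [if_neg h, hξn]
          simp only
          rw [if_neg (by omega)]
          simp
      rw [Finset.sum_congr rfl e2, Finset.sum_ite_eq' _ _ _]
      split_ifs
      · exact le_refl _
      · positivity
    have hsq : norm2 F (T j) ^ 2 ≤ (C * norm2 F ξ) ^ 2 := by
      calc norm2 F (T j) ^ 2 = ∑ m ∈ MS, ∑ γ ∈ Γ.filter (fun γ => (L γ : ℤ) = m),
            ‖T j γ‖ ^ 2 * F.d γ ^ 2 := by rw [h1, h2]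
        _ ≤ ∑ m ∈ MS, C ^ 2 * norm2 F (ξn (m - j)) ^ 2 := Finset.sum_le_sum h3
        _ = C ^ 2 * ∑ m ∈ MS, norm2 F (ξn (m - j)) ^ 2 := by rw [Finset.mul_sum]
        _ ≤ C ^ 2 * norm2 F ξ ^ 2 := mul_le_mul_of_nonneg_left h4 (by positivity)
        _ = (C * norm2 F ξ) ^ 2 := by ring
    exact le_of_sq_le_sq' (norm2_nonneg F _) (mul_nonneg hC (norm2_nonneg F ξ)) hsq
  -- assemble
  rw [decomp]
  have habs : ((∑ j ∈ Finset.Icc (-(p : ℤ)) (p : ℤ), |j| : ℤ) : ℝ)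
      = ∑ j ∈ Finset.Icc (-(p : ℤ)) (p : ℤ), |(j : ℝ)| := by
    push_cast
    rfl
  calc norm2 F (fun γ => ∑ j ∈ Finset.Icc (-(p : ℤ)) (p : ℤ), S j γ)
      ≤ ∑ j ∈ Finset.Icc (-(p : ℤ)) (p : ℤ), norm2 F (S j) :=
        norm2_finsetsum_le F _ _ (fun j _ => hSfin j)
    _ ≤ ∑ j ∈ Finset.Icc (-(p : ℤ)) (p : ℤ), |(j : ℝ)| * (C * norm2 F ξ) := by
        refine Finset.sum_le_sum fun j _ => ?_
        have : norm2 F (S j) = ‖(j : ℂ)‖ * norm2 F (T j) := by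
          rw [hS]
          exact norm2_const_mul F _ (hTfin j)
        rw [this]
        have hn : ‖((j : ℤ) : ℂ)‖ = |(j : ℝ)| := by
          rw [Complex.norm_intCast]
        rw [hn]
        exact mul_le_mul_of_nonneg_left (hTbound j) (abs_nonneg _)
    _ = (∑ j ∈ Finset.Icc (-(p : ℤ)) (p : ℤ), |(j : ℝ)|) * (C * norm2 F ξ) := by
        rw [Finset.sum_mul]
    _ = ((p : ℝ) * (p + 1)) * (C * norm2 F ξ) := by
        rw [← habs, sum_abs_Icc p]
        push_cast
        ring
    _ = (p : ℝ) * (p + 1) * C * norm2 F ξ := by ring
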